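/- Let d ≥ 3 and ℓ ≥ 1. For any two rainbow edge colorings c₁, c₂ (with colors in a common set) of two disjoint complete d-ary trees with ℓ levels, m(c₁,c₂) ≥ (1 − Σ_{i=1}^{ℓ} i/d^{i}) · d^{2ℓ}. -/

import Mathlib

/-- An edge of the complete `d`-ary tree with `ℓ` levels: a nonempty sequence over `Fin d`
of length at most `ℓ`, indexing the vertex that the edge joins to its parent. -/
def TreeEdge (d ℓ : ℕ) : Type := {s : List (Fin d) // s ≠ [] ∧ s.length ≤ ℓ}

/-- A leaf of the complete `d`-ary tree with `ℓ` levels: a sequence of length `ℓ`. -/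
def TreeLeaf (d ℓ : ℕ) : Type := {s : List (Fin d) // s.length = ℓ}

/-- The root-to-leaf path `P(v)`: the set of (edges indexed by) nonempty prefixes of `v`. -/
def leafPath {d ℓ : ℕ} (v : TreeLeaf d ℓ) : Set (TreeEdge d ℓ) := {e | e.1 <+: v.1}

/-- The set of pairs of leaves `(v, w)` such that the combined path `P(v) ∪ P(w)` is
rainbow: `c₁` is injective on `P(v)`, `c₂` is injective on `P(w)`, and the color sets
`c₁(P(v))` and `c₂(P(w))` are disjoint. -/
def rainbowPairs {C : Type*} {d ℓ : ℕ} (c₁ c₂ : TreeEdge d ℓ → C) :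
    Set (TreeLeaf d ℓ × TreeLeaf d ℓ) :=
  {p | Set.InjOn c₁ (leafPath p.1) ∧ Set.InjOn c₂ (leafPath p.2) ∧
    Disjoint (c₁ '' leafPath p.1) (c₂ '' leafPath p.2)}

/-- `m(c₁,c₂)`: the number of pairs of leaves whose combined root-to-leaf paths are rainbow. -/
noncomputable def mPairs {C : Type*} {d ℓ : ℕ} (c₁ c₂ : TreeEdge d ℓ → C) : ℕ :=
  Nat.card (rainbowPairs c₁ c₂)

section Aux

open Finset

variable {d ℓ : ℕ}

instance : DecidableEq (TreeEdge d ℓ) :=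
  inferInstanceAs (DecidableEq {s : List (Fin d) // s ≠ [] ∧ s.length ≤ ℓ})

instance : DecidableEq (TreeLeaf d ℓ) :=
  inferInstanceAs (DecidableEq {s : List (Fin d) // s.length = ℓ})

instance : Fintype (TreeLeaf d ℓ) :=
  inferInstanceAs (Fintype (List.Vector (Fin d) ℓ))

lemma card_treeLeaf (d n : ℕ) : Fintype.card (TreeLeaf d n) = d ^ n := by
  have h : Fintype.card (TreeLeaf d n) = Fintype.card (List.Vector (Fin d) n) := rfl
  rw [h, card_vector, Fintype.card_fin]

noncomputable instance : Fintype (TreeEdge d ℓ) :=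
  Fintype.ofInjective (fun e : TreeEdge d ℓ => (fun k : Fin ℓ => e.1[k.1]?)) (by
    intro a b h
    apply Subtype.ext
    apply List.ext_getElem?
    intro n
    by_cases hn : n < ℓ
    · exact congrFun h ⟨n, hn⟩
    · have ha := a.2.2
      have hb := b.2.2
      rw [List.getElem?_eq_none (by omega : a.1.length ≤ n),
        List.getElem?_eq_none (by omega : b.1.length ≤ n)])

/-- Leaves above a given edge. -/
def leafExt (e : TreeEdge d ℓ) : Finset (TreeLeaf d ℓ) :=
  univ.filter (fun v => e.1 <+: v.1)

lemma card_leafExt (e : TreeEdge d ℓ) :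
    (leafExt e).card = d ^ (ℓ - e.1.length) := by
  rw [← card_treeLeaf d (ℓ - e.1.length), ← Finset.card_univ]
  refine Finset.card_bij'
    (fun v _ => (⟨v.1.drop e.1.length, by
      have := v.2; simp [this]⟩ : TreeLeaf d (ℓ - e.1.length)))
    (fun w _ => (⟨e.1 ++ w.1, by
      have h1 := w.2; have h2 := e.2.2
      simp only [List.length_append, h1]; omega⟩ : TreeLeaf d ℓ))
    (fun v hv => Finset.mem_univ _) ?_ ?_ ?_
  · intro w hw
    exact Finset.mem_filter.2 ⟨Finset.mem_univ _, w.1, rfl⟩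
  · intro v hv
    apply Subtype.ext
    simp only [leafExt, Finset.mem_filter] at hv
    have := (List.prefix_iff_eq_take).1 hv.2
    conv_rhs => rw [← List.take_append_drop e.1.length v.1]
    rw [← this]
  · intro w hw
    apply Subtype.ext
    simp [List.drop_left]

/-- Edges of depth `i` are in bijection with lists of length `i`. -/
lemma card_depth_fiber (i : ℕ) (hi : 1 ≤ i) (hil : i ≤ ℓ) :
    (univ.filter (fun e : TreeEdge d ℓ => e.1.length = i)).card = d ^ i := by
  rw [← card_treeLeaf d i, ← Finset.card_univ]
  refine Finset.card_bij'
    (fun e he => (⟨e.1, by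
      simp only [Finset.mem_filter] at he; exact he.2⟩ : TreeLeaf d i))
    (fun w _ => (⟨w.1, by
      constructor
      · intro hnil
        have := w.2
        rw [hnil] at this
        simp at this
        omega
      · rw [w.2]; exact hil⟩ : TreeEdge d ℓ))
    (fun e he => Finset.mem_univ _) ?_ ?_ ?_
  · intro w hw
    exact Finset.mem_filter.2 ⟨Finset.mem_univ _, w.2⟩
  · intro e he
    apply Subtype.ext; rfl
  · intro w hw
    apply Subtype.ext; rfl

lemma sum_sq_leafExt (hℓ : 1 ≤ ℓ) :
    ∑ e : TreeEdge d ℓ, (leafExt e).card ^ 2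
      = ∑ i ∈ Finset.Icc 1 ℓ, d ^ i * (d ^ (ℓ - i)) ^ 2 := by
  rw [← Finset.sum_fiberwise_of_maps_to (g := fun e : TreeEdge d ℓ => e.1.length)
    (t := Finset.Icc 1 ℓ)
    (fun e _ => by
      simp only [Finset.mem_Icc]
      refine ⟨?_, e.2.2⟩
      have := e.2.1
      cases h : e.1 with
      | nil => exact absurd h this
      | cons a l => simp [h])]
  apply Finset.sum_congr rfl
  intro i hi
  simp only [Finset.mem_Icc] at hi
  rw [← card_depth_fiber i hi.1 hi.2, Finset.card_eq_sum_ones, Finset.sum_mul, one_mul]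
  apply Finset.sum_congr rfl
  intro e he
  simp only [Finset.mem_filter] at he
  rw [card_leafExt, he.2]

end Aux

/-- for `d ≥ 3`, `ℓ ≥ 1` and rainbow colorings `c₁, c₂` of two disjoint
complete `d`-ary trees with `ℓ` levels,
`m(c₁,c₂) ≥ (1 − Σ_{i=1}^{ℓ} i/d^i) · d^(2ℓ)`. -/
theorem stmt_1 (d ℓ : ℕ) (hd : 3 ≤ d) (hℓ : 1 ≤ ℓ) {C : Type*}
    (c₁ c₂ : TreeEdge d ℓ → C)
    (h₁ : Function.Injective c₁) (h₂ : Function.Injective c₂) :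
    (mPairs c₁ c₂ : ℝ) ≥
      (1 - ∑ i ∈ Finset.Icc 1 ℓ, (i : ℝ) / (d : ℝ) ^ i) * (d : ℝ) ^ (2 * ℓ) := by
  classical
  -- the matched pairs of edges
  set M : Finset (TreeEdge d ℓ × TreeEdge d ℓ) :=
    Finset.univ.filter (fun q => c₁ q.1 = c₂ q.2) with hM
  -- the bad pairs of leaves
  set bad : Finset (TreeLeaf d ℓ × TreeLeaf d ℓ) :=
    Finset.univ.filter (fun p => ¬ p ∈ rainbowPairs c₁ c₂) with hbad
  set good : Finset (TreeLeaf d ℓ × TreeLeaf d ℓ) :=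
    Finset.univ.filter (fun p => p ∈ rainbowPairs c₁ c₂) with hgood
  have hcardL : Fintype.card (TreeLeaf d ℓ) = d ^ ℓ := card_treeLeaf d ℓ
  have hpart : good.card + bad.card = d ^ (2 * ℓ) := by
    rw [hgood, hbad, Finset.card_filter_add_card_filter_not (fun p => p ∈ rainbowPairs c₁ c₂)]
    rw [Finset.card_univ, Fintype.card_prod, hcardL, ← pow_add, two_mul]
  -- bad pairs are covered by the matched-pair products
  have hcover : bad ⊆ M.biUnion (fun q => leafExt q.1 ×ˢ leafExt q.2) := by
    intro p hp
    rw [hbad, Finset.mem_filter] at hp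
    have hnd : ¬ Disjoint (c₁ '' leafPath p.1) (c₂ '' leafPath p.2) := by
      intro hdisj
      exact hp.2 ⟨h₁.injOn, h₂.injOn, hdisj⟩
    rw [Set.not_disjoint_iff] at hnd
    obtain ⟨x, ⟨e, he, hxe⟩, ⟨f, hf, hxf⟩⟩ := hnd
    rw [Finset.mem_biUnion]
    refine ⟨(e, f), ?_, ?_⟩
    · rw [hM, Finset.mem_filter]
      exact ⟨Finset.mem_univ _, by rw [hxe, hxf]⟩
    · rw [Finset.mem_product]
      constructor
      · simp only [leafExt, Finset.mem_filter, Finset.mem_univ, true_and]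
        exact he
      · simp only [leafExt, Finset.mem_filter, Finset.mem_univ, true_and]
        exact hf
  have hbadle : bad.card ≤ ∑ q ∈ M, (leafExt q.1).card * (leafExt q.2).card := by
    calc bad.card ≤ (M.biUnion (fun q => leafExt q.1 ×ˢ leafExt q.2)).card :=
          Finset.card_le_card hcover
      _ ≤ ∑ q ∈ M, (leafExt q.1 ×ˢ leafExt q.2).card := Finset.card_biUnion_le
      _ = ∑ q ∈ M, (leafExt q.1).card * (leafExt q.2).card := by
          apply Finset.sum_congr rfl; intro q _; exact Finset.card_product _ _
  -- AM-GM and injectivity of the matching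
  have hMfst : ∀ x ∈ M, ∀ y ∈ M, x.1 = y.1 → x = y := by
    intro x hx y hy hxy
    rw [hM, Finset.mem_filter] at hx hy
    have : c₂ x.2 = c₂ y.2 := by rw [← hx.2, ← hy.2, hxy]
    exact Prod.ext hxy (h₂ this)
  have hMsnd : ∀ x ∈ M, ∀ y ∈ M, x.2 = y.2 → x = y := by
    intro x hx y hy hxy
    rw [hM, Finset.mem_filter] at hx hy
    have : c₁ x.1 = c₁ y.1 := by rw [hx.2, hy.2, hxy]
    exact Prod.ext (h₁ this) hxy
  have hsum1 : ∑ q ∈ M, (leafExt q.1).card ^ 2 ≤ ∑ e : TreeEdge d ℓ, (leafExt e).card ^ 2 := by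
    rw [← Finset.sum_image (g := Prod.fst) (f := fun e => (leafExt e).card ^ 2) hMfst]
    exact Finset.sum_le_sum_of_subset (Finset.subset_univ _)
  have hsum2 : ∑ q ∈ M, (leafExt q.2).card ^ 2 ≤ ∑ e : TreeEdge d ℓ, (leafExt e).card ^ 2 := by
    rw [← Finset.sum_image (g := Prod.snd) (f := fun e => (leafExt e).card ^ 2) hMsnd]
    exact Finset.sum_le_sum_of_subset (Finset.subset_univ _)
  have hamgm : 2 * ∑ q ∈ M, (leafExt q.1).card * (leafExt q.2).card
      ≤ 2 * ∑ e : TreeEdge d ℓ, (leafExt e).card ^ 2 := by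
    rw [Finset.mul_sum]
    calc ∑ q ∈ M, 2 * ((leafExt q.1).card * (leafExt q.2).card)
        ≤ ∑ q ∈ M, ((leafExt q.1).card ^ 2 + (leafExt q.2).card ^ 2) := by
          apply Finset.sum_le_sum
          intro q _
          rw [← mul_assoc]
          exact two_mul_le_add_sq _ _
      _ = ∑ q ∈ M, (leafExt q.1).card ^ 2 + ∑ q ∈ M, (leafExt q.2).card ^ 2 :=
          Finset.sum_add_distrib
      _ ≤ ∑ e : TreeEdge d ℓ, (leafExt e).card ^ 2 + ∑ e : TreeEdge d ℓ, (leafExt e).card ^ 2 :=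
          Nat.add_le_add hsum1 hsum2
      _ = 2 * ∑ e : TreeEdge d ℓ, (leafExt e).card ^ 2 := (two_mul _).symm
  have hbadle2 : bad.card ≤ ∑ i ∈ Finset.Icc 1 ℓ, d ^ i * (d ^ (ℓ - i)) ^ 2 := by
    have := sum_sq_leafExt (d := d) hℓ
    omega
  -- pass to the reals
  have hmP : (mPairs c₁ c₂ : ℕ) = good.card := by
    rw [mPairs, Nat.card_coe_set_eq, Set.ncard_eq_toFinset_card']
    congr 1
    ext p
    simp [hgood]
  have hdpos : (0 : ℝ) < (d : ℝ) := by
    have : 0 < d := by omega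
    exact_mod_cast this
  have hd0 : (d : ℝ) ≠ 0 := ne_of_gt hdpos
  rw [hmP, ge_iff_le]
  have key : ∀ i ∈ Finset.Icc 1 ℓ,
      ((d ^ i * (d ^ (ℓ - i)) ^ 2 : ℕ) : ℝ) ≤ (i : ℝ) / (d : ℝ) ^ i * (d : ℝ) ^ (2 * ℓ) := by
    intro i hi
    simp only [Finset.mem_Icc] at hi
    have h3 : (d : ℝ) ^ (2 * ℓ) = (d : ℝ) ^ i * (d : ℝ) ^ (2 * ℓ - i) := by
      rw [← pow_add]; congr 1; omega
    have h2 : ((d ^ i * (d ^ (ℓ - i)) ^ 2 : ℕ) : ℝ) = (d : ℝ) ^ (2 * ℓ - i) := by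
      push_cast
      rw [← pow_mul, ← pow_add]; congr 1; omega
    have h4 : (i : ℝ) / (d : ℝ) ^ i * ((d : ℝ) ^ i * (d : ℝ) ^ (2 * ℓ - i))
        = (i : ℝ) * (d : ℝ) ^ (2 * ℓ - i) := by
      field_simp
    rw [h2, h3, h4]
    have hi1 : (1 : ℝ) ≤ (i : ℝ) := by exact_mod_cast hi.1
    exact le_mul_of_one_le_left (le_of_lt (pow_pos hdpos _)) hi1
  have hsumR : (bad.card : ℝ) ≤ ∑ i ∈ Finset.Icc 1 ℓ, (i : ℝ) / (d : ℝ) ^ i * (d : ℝ) ^ (2 * ℓ) := by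
    calc (bad.card : ℝ) ≤ ((∑ i ∈ Finset.Icc 1 ℓ, d ^ i * (d ^ (ℓ - i)) ^ 2 : ℕ) : ℝ) := by
          exact_mod_cast hbadle2
      _ = ∑ i ∈ Finset.Icc 1 ℓ, ((d ^ i * (d ^ (ℓ - i)) ^ 2 : ℕ) : ℝ) := Nat.cast_sum _ _
      _ ≤ _ := Finset.sum_le_sum key
  have hgc : (good.card : ℝ) + (bad.card : ℝ) = (d : ℝ) ^ (2 * ℓ) := by
    have := hpart
    exact_mod_cast this
  rw [sub_mul, one_mul, Finset.sum_mul]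
  linarith [hsumR, hgc]
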